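/- For every nondegenerate interval I ⊆ ℝ and every θ ∈ [0,1] there exists a max-family (f_n : I → ℝ)_{n=1}^∞ such that dim_H I_f = θ and I_f can be decomposed as I_f = A ∪ B where A is nowhere dense in I and B has Hausdorff dimension zero. -/

import Mathlib

open Set Filter Topology MeasureTheory

open NNReal ENNReal

/-- `limSet I f` is the set `I_f = {x ∈ I : lim_{n→∞} f_n(x) = +∞}`. -/
def limSet (I : Set ℝ) (f : ℕ → ℝ → ℝ) : Set ℝ :=
  {x ∈ I | Tendsto (fun n => f n x) atTop atTop}

/-- A max-family on `I`: a nondecreasing sequence of continuous functions whose integrals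
over every nondegenerate subinterval of `I` tend to `+∞`. -/
def IsMaxFamily (I : Set ℝ) (f : ℕ → ℝ → ℝ) : Prop :=
  (∀ n, ContinuousOn (f n) I) ∧
  (∀ n, ∀ x ∈ I, f n x ≤ f (n + 1) x) ∧
  (∀ x ∈ I, ∀ y ∈ I, x < y →
    Tendsto (fun n => ∫ t in x..y, f n t) atTop atTop)

set_option maxHeartbeats 800000



noncomputable def ratQ : ℕ → ℝ := fun k => (((Denumerable.eqv ℚ).symm k : ℚ) : ℝ)

lemma ratQ_surj (ρ : ℚ) : ∃ k, ratQ k = (ρ : ℝ) :=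
  ⟨(Denumerable.eqv ℚ) ρ, by
    show (((Denumerable.eqv ℚ).symm ((Denumerable.eqv ℚ) ρ) : ℚ) : ℝ) = (ρ : ℝ)
    rw [Equiv.symm_apply_apply]⟩

lemma dimH_zero_of (s : Set ℝ) (h : ∀ σ : ℝ≥0, 0 < σ → μH[(σ : ℝ)] s ≠ ⊤) : dimH s = 0 := by
  by_contra hc
  obtain ⟨σ, hσ0, hσ⟩ := ENNReal.lt_iff_exists_nnreal_btwn.mp (pos_iff_ne_zero.mpr hc)
  exact absurd (dimH_le_of_hausdorffMeasure_ne_top (h σ (by exact_mod_cast hσ0))) (not_le.mpr hσ)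

/-- The bad set of points well-approximated by `q k` infinitely often. -/
def Eset (q : ℕ → ℝ) : Set ℝ :=
  {x | ∀ N, ∃ k, N ≤ k ∧ |x - q k| ≤ (2:ℝ)⁻¹ ^ k}

lemma pow_rpow_comm {b : ℝ} (hb : 0 ≤ b) (m : ℕ) (σ : ℝ) : (b ^ m) ^ σ = (b ^ σ) ^ m := by
  rw [← Real.rpow_natCast b m, ← Real.rpow_mul hb, mul_comm, Real.rpow_mul hb,
    Real.rpow_natCast]

lemma dimH_Eset (q : ℕ → ℝ) : dimH (Eset q) = 0 := by
  apply dimH_zero_of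
  intro σ hσ0
  set σ' : ℝ := (σ : ℝ) with hσ'
  have hσpos : (0:ℝ) < σ' := hσ0
  set d : ℝ := (2:ℝ)⁻¹ ^ σ' with hd
  have hd0 : 0 ≤ d := Real.rpow_nonneg (by norm_num) _
  have hd1 : d < 1 := Real.rpow_lt_one (by norm_num) (by norm_num) hσpos
  have key : μH[σ'] (Eset q) = 0 := by
    have hle := MeasureTheory.Measure.hausdorffMeasure_le_liminf_tsum (d := σ') (s := Eset q) (l := atTop)
      (r := fun n => ENNReal.ofReal (2 * (2:ℝ)⁻¹ ^ n))
      (by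
        have : Tendsto (fun n : ℕ => 2 * (2:ℝ)⁻¹ ^ n) atTop (𝓝 0) := by
          simpa using (tendsto_pow_atTop_nhds_zero_of_lt_one (by norm_num : (0:ℝ) ≤ 2⁻¹)
            (by norm_num)).const_mul (2:ℝ)
        simpa using (ENNReal.tendsto_ofReal this))
      (t := fun n k => Icc (q (n+k) - (2:ℝ)⁻¹ ^ (n+k)) (q (n+k) + (2:ℝ)⁻¹ ^ (n+k)))
      (by
        filter_upwards with n
        intro k
        rw [Real.ediam_Icc]
        apply ENNReal.ofReal_le_ofReal
        have h1 : ((2:ℝ)⁻¹) ^ (n+k) ≤ (2:ℝ)⁻¹ ^ n := by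
          apply pow_le_pow_of_le_one (by norm_num) (by norm_num); omega
        nlinarith)
      (by
        filter_upwards with n
        intro x hx
        obtain ⟨k, hk, habs⟩ := hx n
        refine mem_iUnion.mpr ⟨k - n, ?_⟩
        have hkn : n + (k - n) = k := by omega
        rw [hkn]
        constructor <;> [skip; skip] <;> cases' abs_le.mp habs with h1 h2 <;> linarith)
    refine le_antisymm ?_ zero_le
    refine hle.trans (le_of_eq ?_)
    have hS : ∀ n : ℕ, (∑' k : ℕ, EMetric.diam
        (Icc (q (n+k) - (2:ℝ)⁻¹ ^ (n+k)) (q (n+k) + (2:ℝ)⁻¹ ^ (n+k))) ^ σ')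
        = ENNReal.ofReal ((2:ℝ) ^ σ' * d ^ n * (1 - d)⁻¹) := by
      intro n
      have hterm : ∀ k : ℕ, EMetric.diam
          (Icc (q (n+k) - (2:ℝ)⁻¹ ^ (n+k)) (q (n+k) + (2:ℝ)⁻¹ ^ (n+k))) ^ σ'
          = ENNReal.ofReal (((2:ℝ) ^ σ' * d ^ n) * d ^ k) := by
        intro k
        rw [EMetric.diam, Real.ediam_Icc]
        have h2w : q (n+k) + (2:ℝ)⁻¹ ^ (n+k) - (q (n+k) - (2:ℝ)⁻¹ ^ (n+k))
            = 2 * (2:ℝ)⁻¹ ^ (n+k) := by ring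
        rw [h2w, ENNReal.ofReal_rpow_of_pos (by positivity)]
        congr 1
        rw [Real.mul_rpow (by norm_num) (by positivity), pow_add,
          Real.mul_rpow (by positivity) (by positivity),
          pow_rpow_comm (by norm_num) n, pow_rpow_comm (by norm_num) k]
        ring
      simp_rw [hterm]
      rw [← ENNReal.ofReal_tsum_of_nonneg (fun k => by positivity)
        ((summable_geometric_of_lt_one hd0 hd1).mul_left _)]
      rw [_root_.tsum_mul_left, tsum_geometric_of_lt_one hd0 hd1]
    calc liminf (fun n : ℕ => ∑' k : ℕ, EMetric.diam
          (Icc (q (n+k) - (2:ℝ)⁻¹ ^ (n+k)) (q (n+k) + (2:ℝ)⁻¹ ^ (n+k))) ^ σ') atTop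
        = liminf (fun n : ℕ => ENNReal.ofReal ((2:ℝ) ^ σ' * d ^ n * (1 - d)⁻¹)) atTop := by
          congr 1; funext n; exact hS n
      _ = 0 := by
          apply Tendsto.liminf_eq
          have : Tendsto (fun n : ℕ => (2:ℝ) ^ σ' * d ^ n * (1 - d)⁻¹) atTop (𝓝 0) := by
            have := ((tendsto_pow_atTop_nhds_zero_of_lt_one hd0 hd1).const_mul
              ((2:ℝ) ^ σ')).mul_const ((1 - d)⁻¹)
            simpa using this
          simpa using ENNReal.tendsto_ofReal this
  simp [key]

/-- Fat Cantor set: closed, nowhere dense subset of `[a,b]` of Hausdorff dimension 1. -/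
lemma exists_fatCantor {a b : ℝ} (hab : a < b) :
    ∃ K : Set ℝ, K.Nonempty ∧ IsClosed K ∧ K ⊆ Icc a b ∧ interior K = ∅ ∧ dimH K = 1 := by
  set w : ℕ → ℝ := fun k => (b - a) / 8 * (4:ℝ)⁻¹ ^ k with hw
  have hba : (0:ℝ) < b - a := by linarith
  have hwpos : ∀ k, 0 < w k := fun k => by
    rw [hw]; positivity
  set U : Set ℝ := ⋃ k, Ioo (ratQ k - w k) (ratQ k + w k) with hU
  set K : Set ℝ := Icc a b \ U with hK
  have hKcl : IsClosed K := isClosed_Icc.sdiff (isOpen_iUnion fun k => isOpen_Ioo)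
  have hKsub : K ⊆ Icc a b := diff_subset
  have hUvol : volume U ≤ ENNReal.ofReal ((b - a) / 3) := by
    refine (measure_iUnion_le _).trans ?_
    have h1 : ∀ k, volume (Ioo (ratQ k - w k) (ratQ k + w k)) = ENNReal.ofReal (2 * w k) := by
      intro k; rw [Real.volume_Ioo]; congr 1; ring
    simp_rw [h1]
    have h2 : ∀ k : ℕ, 2 * w k = (2 * ((b - a) / 8)) * (4:ℝ)⁻¹ ^ k := fun k => by
      rw [hw]; ring
    simp_rw [h2]
    rw [← ENNReal.ofReal_tsum_of_nonneg (fun k => by positivity)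
      ((summable_geometric_of_lt_one (by norm_num : (0:ℝ) ≤ 4⁻¹) (by norm_num)).mul_left
          (2 * ((b - a) / 8)))]
    apply ENNReal.ofReal_le_ofReal
    rw [_root_.tsum_mul_left, tsum_geometric_of_lt_one (by norm_num : (0:ℝ) ≤ 4⁻¹) (by norm_num)]
    nlinarith
  have hKvol : volume K ≠ 0 := by
    have hsub : Icc a b ⊆ K ∪ U := fun x hx => by
      by_cases h : x ∈ U
      · exact Or.inr h
      · exact Or.inl ⟨hx, h⟩
    have h1 : ENNReal.ofReal (b - a) ≤ volume K + ENNReal.ofReal ((b - a) / 3) := by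
      calc ENNReal.ofReal (b - a) = volume (Icc a b) := (Real.volume_Icc).symm
        _ ≤ volume (K ∪ U) := measure_mono hsub
        _ ≤ volume K + volume U := measure_union_le _ _
        _ ≤ volume K + ENNReal.ofReal ((b - a) / 3) := by gcongr
    intro h0
    rw [h0, zero_add] at h1
    have := ENNReal.ofReal_le_ofReal_iff (by linarith : (0:ℝ) ≤ (b-a)/3) |>.mp h1
    linarith
  refine ⟨K, nonempty_of_measure_ne_zero hKvol, hKcl, hKsub, ?_, ?_⟩
  · rw [interior_eq_empty_iff_dense_compl]
    rw [Metric.dense_iff]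
    intro x r hr
    obtain ⟨ρ, hρ1, hρ2⟩ := exists_rat_btwn (show x < x + r by linarith)
    obtain ⟨k, hk⟩ := ratQ_surj ρ
    refine ⟨ratQ k, ?_, ?_⟩
    · rw [Metric.mem_ball, Real.dist_eq, hk, abs_lt]; constructor <;> linarith
    · intro hmem
      exact hmem.2 (mem_iUnion.mpr ⟨k, by constructor <;> nlinarith [hwpos k]⟩)
  · refine le_antisymm ?_ ?_
    · calc dimH K ≤ dimH (univ : Set ℝ) := dimH_mono (subset_univ K)
        _ = 1 := Real.dimH_univ
    · have : μH[((1:ℝ≥0) : ℝ)] K ≠ 0 := by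
        rw [show (((1:ℝ≥0)):ℝ) = (1:ℝ) by norm_num, hausdorffMeasure_real]
        exact hKvol
      simpa using le_dimH_of_hausdorffMeasure_ne_zero this



/-! ### A Cantor-type set of prescribed Hausdorff dimension -/

noncomputable def bitC (i : ℕ) (x : ℝ) : ℤ := ⌊x * 2 ^ (i + 1)⌋ % 2

noncomputable def termC (r x : ℝ) (i : ℕ) : ℝ := if bitC i x = 1 then (1 - r) * r ^ i else 0

noncomputable def gC (r x : ℝ) : ℝ := ∑' i, termC r x i

lemma pow_rpow_comm' {b : ℝ} (hb : 0 ≤ b) (m : ℕ) (σ : ℝ) : (b ^ m) ^ σ = (b ^ σ) ^ m := by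
  rw [← Real.rpow_natCast b m, ← Real.rpow_mul hb, mul_comm, Real.rpow_mul hb,
    Real.rpow_natCast]

section CantorBasic

variable {r : ℝ} (hr0 : 0 < r) (hr2 : r < 2⁻¹)

include hr0 hr2

private lemma hr1 : r < 1 := by linarith
private lemma h1r : (0:ℝ) < 1 - r := by linarith
private lemma h12r : (0:ℝ) < 1 - 2 * r := by linarith

lemma termC_nonneg (x : ℝ) (i : ℕ) : 0 ≤ termC r x i := by
  have h1 : (0:ℝ) < 1 - r := by linarith
  have h2 := hr0.le
  unfold termC; split
  · positivity
  · exact le_rfl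

lemma termC_le (x : ℝ) (i : ℕ) : termC r x i ≤ (1 - r) * r ^ i := by
  have h1 : (0:ℝ) < 1 - r := by linarith
  have h2 := hr0.le
  unfold termC; split
  · exact le_rfl
  · positivity

lemma summable_geom_mul (c : ℝ) : Summable (fun i : ℕ => c * r ^ i) :=
  (summable_geometric_of_lt_one hr0.le (hr1 hr0 hr2)).mul_left c

lemma summable_termC (x : ℝ) : Summable (termC r x) :=
  Summable.of_nonneg_of_le (termC_nonneg hr0 hr2 x) (termC_le hr0 hr2 x)
    (summable_geom_mul hr0 hr2 (1 - r))

lemma tsum_geom_mul (c : ℝ) : ∑' i : ℕ, c * r ^ i = c * (1 - r)⁻¹ := by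
  rw [_root_.tsum_mul_left, tsum_geometric_of_lt_one hr0.le (hr1 hr0 hr2)]

lemma gC_nonneg (x : ℝ) : 0 ≤ gC r x :=
  tsum_nonneg (termC_nonneg hr0 hr2 x)

lemma gC_le_one (x : ℝ) : gC r x ≤ 1 := by
  have h := Summable.tsum_le_tsum (termC_le hr0 hr2 x) (summable_termC hr0 hr2 x)
    (summable_geom_mul hr0 hr2 (1 - r))
  rw [tsum_geom_mul hr0 hr2] at h
  have h1r' := h1r hr0 hr2
  calc gC r x ≤ (1 - r) * (1 - r)⁻¹ := h
    _ = 1 := mul_inv_cancel₀ (by linarith)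

/-- Tail bound for series dominated by the geometric tail. -/
lemma tail_abs (D : ℕ → ℝ) (hD : ∀ i, |D i| ≤ (1 - r) * r ^ i) (c : ℕ) :
    |∑' i, D (i + c)| ≤ r ^ c := by
  have h1r' := h1r hr0 hr2
  have hb : ∀ i : ℕ, |D (i + c)| ≤ ((1 - r) * r ^ c) * r ^ i := by
    intro i
    calc |D (i + c)| ≤ (1 - r) * r ^ (i + c) := hD (i + c)
      _ = ((1 - r) * r ^ c) * r ^ i := by rw [pow_add]; ring
  have hsumabs : Summable fun i => |D (i + c)| :=
    Summable.of_nonneg_of_le (fun i => abs_nonneg _) hb (summable_geom_mul hr0 hr2 _)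
  have hsum : Summable fun i => D (i + c) := hsumabs.of_abs
  calc |∑' i, D (i + c)| ≤ ∑' i, |D (i + c)| := by
        have := norm_tsum_le_tsum_norm (f := fun i => D (i + c))
          (by simpa only [Real.norm_eq_abs] using hsumabs)
        simpa only [Real.norm_eq_abs] using this
    _ ≤ ∑' i : ℕ, ((1 - r) * r ^ c) * r ^ i := Summable.tsum_le_tsum hb hsumabs
        (summable_geom_mul hr0 hr2 _)
    _ = ((1 - r) * r ^ c) * (1 - r)⁻¹ := tsum_geom_mul hr0 hr2 _
    _ = r ^ c := by field_simp

lemma termC_abs_sub_le (x y : ℝ) (i : ℕ) : |termC r x i - termC r y i| ≤ (1 - r) * r ^ i := by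
  have h1 := termC_nonneg hr0 hr2 x i
  have h2 := termC_nonneg hr0 hr2 y i
  have h3 := termC_le hr0 hr2 x i
  have h4 := termC_le hr0 hr2 y i
  rw [abs_le]; constructor <;> linarith

/-- If the first `m` bits agree, values of `gC` are within `r ^ m`. -/
lemma gC_tail (x y : ℝ) (m : ℕ) (h : ∀ i < m, bitC i x = bitC i y) :
    |gC r x - gC r y| ≤ r ^ m := by
  have hsx := summable_termC hr0 hr2 x
  have hsy := summable_termC hr0 hr2 y
  have hdiff : gC r x - gC r y = ∑' i, (termC r x i - termC r y i) :=
    (Summable.tsum_sub hsx hsy).symm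
  have hsub : Summable fun i => termC r x i - termC r y i := hsx.sub hsy
  have hzero : ∀ i ∈ Finset.range m, termC r x i - termC r y i = 0 := by
    intro i hi
    rw [Finset.mem_range] at hi
    unfold termC; rw [h i hi]; ring
  have hsplit := Summable.sum_add_tsum_nat_add (f := fun i => termC r x i - termC r y i) m hsub
  rw [Finset.sum_eq_zero hzero, zero_add] at hsplit
  rw [hdiff, ← hsplit]
  exact tail_abs hr0 hr2 _ (termC_abs_sub_le hr0 hr2 x y) m

/-- Separation: if the bits first differ at position `j`, with `x`'s bit set. -/
lemma gC_sep (x y : ℝ) (j : ℕ) (h : ∀ i < j, bitC i x = bitC i y)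
    (hbx : bitC j x = 1) (hby : bitC j y ≠ 1) :
    (1 - 2 * r) * r ^ j ≤ gC r x - gC r y := by
  have hsx := summable_termC hr0 hr2 x
  have hsy := summable_termC hr0 hr2 y
  have hdiff : gC r x - gC r y = ∑' i, (termC r x i - termC r y i) :=
    (Summable.tsum_sub hsx hsy).symm
  have hsub : Summable fun i => termC r x i - termC r y i := hsx.sub hsy
  have hsplit := Summable.sum_add_tsum_nat_add (f := fun i => termC r x i - termC r y i) (j + 1) hsub
  have hhead : ∑ i ∈ Finset.range (j + 1), (termC r x i - termC r y i) = (1 - r) * r ^ j := by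
    rw [Finset.sum_eq_single_of_mem j (Finset.self_mem_range_succ j)]
    · unfold termC; rw [if_pos hbx, if_neg hby]; ring
    · intro i hi hij
      rw [Finset.mem_range] at hi
      have : i < j := by omega
      unfold termC; rw [h i this]; ring
  have htail := tail_abs hr0 hr2 _ (termC_abs_sub_le hr0 hr2 x y) (j + 1)
  rw [abs_le] at htail
  have hpow : r ^ (j + 1) = r * r ^ j := by ring
  rw [hdiff, ← hsplit, hhead]
  rw [hpow] at htail
  nlinarith [htail.1, pow_pos hr0 j]

end CantorBasic

lemma floor_two_mul_cases (u : ℝ) : ⌊2 * u⌋ = 2 * ⌊u⌋ ∨ ⌊2 * u⌋ = 2 * ⌊u⌋ + 1 := by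
  have h1 := Int.floor_le u
  have h2 := Int.lt_floor_add_one u
  rcases lt_or_ge (2 * u) (2 * (⌊u⌋ : ℝ) + 1) with h | h
  · left
    rw [Int.floor_eq_iff]
    constructor <;> push_cast <;> linarith
  · right
    rw [Int.floor_eq_iff]
    constructor <;> push_cast <;> linarith

lemma floor_agree {x y : ℝ} (hx : x ∈ Ico (0:ℝ) 1) (hy : y ∈ Ico (0:ℝ) 1) (n : ℕ)
    (h : ∀ i < n, bitC i x = bitC i y) : ⌊x * 2 ^ n⌋ = ⌊y * 2 ^ n⌋ := by
  induction n with
  | zero =>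
    simp only [pow_zero, mul_one]
    rw [Int.floor_eq_zero_iff.mpr hx, Int.floor_eq_zero_iff.mpr hy]
  | succ n ih =>
    have hk : ⌊x * 2 ^ n⌋ = ⌊y * 2 ^ n⌋ := ih (fun i hi => h i (by omega))
    have hb : bitC n x = bitC n y := h n (by omega)
    unfold bitC at hb
    have hx2 : x * 2 ^ (n + 1) = 2 * (x * 2 ^ n) := by ring
    have hy2 : y * 2 ^ (n + 1) = 2 * (y * 2 ^ n) := by ring
    rw [hx2, hy2] at hb ⊢
    rcases floor_two_mul_cases (x * 2 ^ n) with h1 | h1 <;>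
      rcases floor_two_mul_cases (y * 2 ^ n) with h2 | h2 <;> omega

section CantorMain

variable {r : ℝ} (hr0 : 0 < r) (hr2 : r < 2⁻¹)

include hr0 hr2

/-- Points of `[0,1)` with close `gC` values agree in their first bits. -/
lemma bits_agree_of_close {x y : ℝ} (hx : x ∈ Ico (0:ℝ) 1) (hy : y ∈ Ico (0:ℝ) 1) (j : ℕ)
    (hlt : |gC r x - gC r y| < (1 - 2 * r) * r ^ j) :
    ∀ i ≤ j, bitC i x = bitC i y := by
  intro i
  induction i using Nat.strong_induction_on with
  | _ i IH =>
    intro hij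
    by_contra hne
    have hprev : ∀ i' < i, bitC i' x = bitC i' y := fun i' hi' => IH i' hi' (by omega)
    have hrj : r ^ j ≤ r ^ i := pow_le_pow_of_le_one hr0.le (by linarith) hij
    have h12r' : (0:ℝ) < 1 - 2 * r := by linarith
    have hkey : (1 - 2 * r) * r ^ j ≤ |gC r x - gC r y| := by
      rcases Int.emod_two_eq ⌊x * 2 ^ (i + 1)⌋ with hbx | hbx <;>
        rcases Int.emod_two_eq ⌊y * 2 ^ (i + 1)⌋ with hby | hby
      · exact absurd (by unfold bitC; omega) hne
      · -- bit y = 1, bit x = 0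
        have := gC_sep hr0 hr2 y x i (fun i' hi' => (hprev i' hi').symm)
          (by unfold bitC; omega) (by unfold bitC; omega)
        calc (1 - 2*r) * r ^ j ≤ (1 - 2*r) * r ^ i := by nlinarith
          _ ≤ gC r y - gC r x := this
          _ ≤ |gC r x - gC r y| := by rw [abs_sub_comm]; exact le_abs_self _
      · -- bit x = 1, bit y = 0
        have := gC_sep hr0 hr2 x y i hprev (by unfold bitC; omega) (by unfold bitC; omega)
        calc (1 - 2*r) * r ^ j ≤ (1 - 2*r) * r ^ i := by nlinarith
          _ ≤ gC r x - gC r y := this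
          _ ≤ |gC r x - gC r y| := le_abs_self _
      · exact absurd (by unfold bitC; omega) hne
    exact absurd hkey (not_le.mpr hlt)

lemma close_of_gC_close {x y : ℝ} (hx : x ∈ Ico (0:ℝ) 1) (hy : y ∈ Ico (0:ℝ) 1) (j : ℕ)
    (hlt : |gC r x - gC r y| < (1 - 2 * r) * r ^ j) :
    |x - y| ≤ (2:ℝ)⁻¹ ^ (j + 1) := by
  have hbits := bits_agree_of_close hr0 hr2 hx hy j hlt
  have hfl : ⌊x * 2 ^ (j+1)⌋ = ⌊y * 2 ^ (j+1)⌋ :=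
    floor_agree hx hy (j+1) (fun i hi => hbits i (by omega))
  have h1 := Int.floor_le (x * 2 ^ (j+1))
  have h2 := Int.lt_floor_add_one (x * 2 ^ (j+1))
  have h3 := Int.floor_le (y * 2 ^ (j+1))
  have h4 := Int.lt_floor_add_one (y * 2 ^ (j+1))
  rw [hfl] at h1 h2
  have hp : (0:ℝ) < 2 ^ (j+1) := by positivity
  have he : (2:ℝ)⁻¹ ^ (j+1) = ((2:ℝ) ^ (j+1))⁻¹ := by rw [inv_pow]
  have e1 : x - y < (2 ^ (j+1))⁻¹ := by
    rw [inv_eq_one_div, lt_div_iff₀ hp]; nlinarith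
  have e2 : y - x < (2 ^ (j+1))⁻¹ := by
    rw [inv_eq_one_div, lt_div_iff₀ hp]; nlinarith
  rw [he]
  exact abs_le.mpr ⟨by linarith, by linarith⟩

end CantorMain

section CantorMeasure

variable {r : ℝ} (hr0 : 0 < r) (hr2 : r < 2⁻¹)

include hr0 hr2

lemma vol_preimage (t : Set ℝ) (j : ℕ)
    (hdiam : EMetric.diam t < ENNReal.ofReal ((1 - 2 * r) * r ^ j)) :
    volume (gC r ⁻¹' t ∩ Ico 0 1) ≤ ENNReal.ofReal ((2:ℝ)⁻¹ ^ (j + 1) * 2) := by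
  rcases (gC r ⁻¹' t ∩ Ico (0:ℝ) 1).eq_empty_or_nonempty with he | ⟨x₀, hx₀⟩
  · simp [he]
  · have hsub : gC r ⁻¹' t ∩ Ico 0 1 ⊆
        Icc (x₀ - (2:ℝ)⁻¹ ^ (j+1)) (x₀ + (2:ℝ)⁻¹ ^ (j+1)) := by
      intro x hx
      have hclose : |gC r x - gC r x₀| < (1 - 2 * r) * r ^ j := by
        have hedist : edist (gC r x) (gC r x₀) ≤ EMetric.diam t :=
          EMetric.edist_le_diam_of_mem hx.1 hx₀.1
        have : edist (gC r x) (gC r x₀) < ENNReal.ofReal ((1 - 2 * r) * r ^ j) :=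
          lt_of_le_of_lt hedist hdiam
        rw [edist_dist] at this
        have hd := ENNReal.ofReal_lt_ofReal_iff_of_nonneg dist_nonneg |>.mp this
        rwa [Real.dist_eq] at hd
      have habs := close_of_gC_close hr0 hr2 hx.2 hx₀.2 j hclose
      rw [abs_le] at habs
      constructor <;> [linarith [habs.1]; linarith [habs.2]]
    calc volume (gC r ⁻¹' t ∩ Ico 0 1) ≤ volume (Icc (x₀ - (2:ℝ)⁻¹ ^ (j+1)) (x₀ + (2:ℝ)⁻¹ ^ (j+1))) :=
          measure_mono hsub
      _ = ENNReal.ofReal ((2:ℝ)⁻¹ ^ (j+1) * 2) := by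
          rw [Real.volume_Icc]; congr 1; ring

variable {d : ℝ} (hd : 0 < d) (hrd : r ^ d = 2⁻¹)

include hd hrd

lemma mass_bound (t : Set ℝ) :
    volume (gC r ⁻¹' t ∩ Ico 0 1) ≤
      ENNReal.ofReal (2 * ((1 - 2*r)⁻¹) ^ d) * EMetric.diam t ^ d := by
  have h12r' : (0:ℝ) < 1 - 2 * r := by linarith
  set ℓ : ℝ≥0∞ := EMetric.diam t with hℓ
  rcases eq_or_ne ℓ 0 with h0 | h0
  · -- diameter zero: volume of preimage is zero
    have hvol : volume (gC r ⁻¹' t ∩ Ico 0 1) = 0 := by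
      by_contra hne
      obtain ⟨n, hn⟩ := ENNReal.exists_inv_two_pow_lt (a := volume (gC r ⁻¹' t ∩ Ico 0 1)) hne
      have hb : volume (gC r ⁻¹' t ∩ Ico 0 1) ≤ (2:ℝ≥0∞)⁻¹ ^ n := by
        have := vol_preimage hr0 hr2 t n (by
          rw [show EMetric.diam t = (0:ℝ≥0∞) from h0]
          exact ENNReal.ofReal_pos.mpr (by positivity))
        refine this.trans ?_
        have : ((2:ℝ)⁻¹ ^ (n + 1) * 2) = (2:ℝ)⁻¹ ^ n := by
          rw [pow_succ]; ring
        rw [this, ENNReal.ofReal_pow (by norm_num), ENNReal.ofReal_inv_of_pos (by norm_num)]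
        norm_num
      exact absurd (lt_of_lt_of_le hn hb) (lt_irrefl _)
    rw [hvol]; exact zero_le
  rcases eq_or_ne ℓ ⊤ with htop | htop
  · rw [htop, ENNReal.top_rpow_of_pos hd, ENNReal.mul_top (by
      simp [ENNReal.ofReal_eq_zero, not_le]; positivity)]
    exact le_top
  -- main case
  have hℓr : (0:ℝ) < ℓ.toReal := ENNReal.toReal_pos h0 htop
  set L : ℝ := ℓ.toReal with hL
  have hLeq : ℓ = ENNReal.ofReal L := (ENNReal.ofReal_toReal htop).symm
  have hex : ∃ n : ℕ, (1 - 2*r) * r ^ n ≤ L := by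
    obtain ⟨n, hn⟩ := exists_pow_lt_of_lt_one hℓr (by linarith : r < 1)
    exact ⟨n, by nlinarith [pow_pos hr0 n]⟩
  set N := Nat.find hex with hN
  have hNspec : (1 - 2*r) * r ^ N ≤ L := Nat.find_spec hex
  have hofR : ∀ u:ℝ, 0 ≤ u → ENNReal.ofReal (2 * ((1 - 2*r)⁻¹) ^ d * u) =
      ENNReal.ofReal (2 * ((1 - 2*r)⁻¹) ^ d) * ENNReal.ofReal u := fun u hu =>
    ENNReal.ofReal_mul (by positivity)
  have hLd : ℓ ^ d = ENNReal.ofReal (L ^ d) := by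
    rw [hLeq, ← ENNReal.ofReal_rpow_of_pos hℓr]
  cases Nat.eq_zero_or_pos N with
  | inl hN0 =>
    -- L ≥ 1 - 2r ; bound volume by 1
    have hL1 : 1 - 2*r ≤ L := by
      have := hNspec; rw [hN0] at this; simpa using this
    have hvol1 : volume (gC r ⁻¹' t ∩ Ico 0 1) ≤ 1 := by
      calc volume (gC r ⁻¹' t ∩ Ico 0 1) ≤ volume (Ico (0:ℝ) 1) :=
            measure_mono inter_subset_right
        _ = 1 := by rw [Real.volume_Ico]; norm_num
    have hrhs : (1:ℝ≥0∞) ≤ ENNReal.ofReal (2 * ((1 - 2*r)⁻¹) ^ d) * ℓ ^ d := by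
      rw [hLd, ← hofR _ (by positivity)]
      have hre : (1:ℝ) ≤ 2 * ((1 - 2*r)⁻¹) ^ d * L ^ d := by
        have h1 : ((1 - 2*r)⁻¹) ^ d * (1 - 2*r) ^ d = 1 := by
          rw [← Real.mul_rpow (by positivity) (by positivity)]
          rw [inv_mul_cancel₀ (by linarith), Real.one_rpow]
        have h2 : (1 - 2*r) ^ d ≤ L ^ d := Real.rpow_le_rpow (by linarith) hL1 hd.le
        nlinarith [Real.rpow_pos_of_pos (show (0:ℝ) < (1-2*r)⁻¹ by positivity) d,
          Real.rpow_pos_of_pos (show (0:ℝ) < 1-2*r by linarith) d]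
      calc (1:ℝ≥0∞) = ENNReal.ofReal 1 := by norm_num
        _ ≤ _ := ENNReal.ofReal_le_ofReal hre
    exact hvol1.trans hrhs
  | inr hNpos =>
    obtain ⟨n, hn⟩ : ∃ n, N = n + 1 := ⟨N - 1, by omega⟩
    have hmin : ¬((1 - 2*r) * r ^ n ≤ L) := Nat.find_min hex (by omega)
    push_neg at hmin
    have hvol := vol_preimage hr0 hr2 t n (by
      rw [show EMetric.diam t = ENNReal.ofReal L from hLeq]
      exact (ENNReal.ofReal_lt_ofReal_iff (by positivity)).mpr hmin)
    refine hvol.trans ?_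
    rw [hLd, ← hofR _ (by positivity)]
    apply ENNReal.ofReal_le_ofReal
    -- (2⁻¹)^(n+1) * 2 ≤ 2 * (1-2r)^{-d} * L^d
    have hkey : ((2:ℝ)⁻¹) ^ (n+1) = (r ^ (n+1)) ^ d := by
      rw [pow_rpow_comm' hr0.le, hrd]
    have hr1L : r ^ (n+1) ≤ L * (1 - 2*r)⁻¹ := by
      rw [hn] at hNspec
      have h4 : r ^ (n+1) ≤ L / (1 - 2*r) := by
        rw [le_div_iff₀ h12r']; nlinarith
      calc r ^ (n+1) ≤ L / (1 - 2*r) := h4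
        _ = L * (1 - 2*r)⁻¹ := by ring
    have h2 : (r ^ (n+1)) ^ d ≤ (L * (1 - 2*r)⁻¹) ^ d :=
      Real.rpow_le_rpow (by positivity) hr1L hd.le
    have h3 : (L * (1 - 2*r)⁻¹) ^ d = L ^ d * ((1 - 2*r)⁻¹) ^ d :=
      Real.mul_rpow hℓr.le (by positivity)
    nlinarith [hkey, h2, h3]

end CantorMeasure

section CantorDim

variable {r : ℝ} (hr0 : 0 < r) (hr2 : r < 2⁻¹) {d : ℝ} (hd : 0 < d) (hrd : r ^ d = 2⁻¹)

include hr0 hr2 hd hrd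

lemma cantor_lower :
    (ENNReal.ofReal (2 * ((1 - 2*r)⁻¹) ^ d))⁻¹ ≤ μH[d] (closure (gC r '' Ico 0 1)) := by
  have h12r' : (0:ℝ) < 1 - 2 * r := by linarith
  set C : ℝ≥0∞ := ENNReal.ofReal (2 * ((1 - 2*r)⁻¹) ^ d) with hC
  have hC0 : C ≠ 0 := by
    rw [hC, Ne, ENNReal.ofReal_eq_zero, not_le]
    positivity
  have hCt : C ≠ ⊤ := ENNReal.ofReal_ne_top
  rw [MeasureTheory.Measure.hausdorffMeasure_apply]
  refine le_iSup_of_le 1 (le_iSup_of_le one_pos ?_)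
  refine le_iInf fun t => le_iInf fun hcov => le_iInf fun _ => ?_
  set S : ℝ≥0∞ := ∑' n, ⨆ _ : (t n).Nonempty, EMetric.diam (t n) ^ d with hS
  have key : (1:ℝ≥0∞) ≤ C * S := by
    have hcover : Ico (0:ℝ) 1 ⊆ ⋃ n, (gC r ⁻¹' (t n) ∩ Ico 0 1) := by
      intro x hx
      have : gC r x ∈ ⋃ n, t n := hcov (subset_closure (mem_image_of_mem _ hx))
      obtain ⟨n, hn⟩ := mem_iUnion.mp this
      exact mem_iUnion.mpr ⟨n, hn, hx⟩
    have h1 : (1:ℝ≥0∞) ≤ ∑' n, volume (gC r ⁻¹' (t n) ∩ Ico 0 1) := by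
      calc (1:ℝ≥0∞) = volume (Ico (0:ℝ) 1) := by rw [Real.volume_Ico]; norm_num
        _ ≤ volume (⋃ n, (gC r ⁻¹' (t n) ∩ Ico 0 1)) := measure_mono hcover
        _ ≤ ∑' n, volume (gC r ⁻¹' (t n) ∩ Ico 0 1) := measure_iUnion_le _
    have h2 : ∀ n, volume (gC r ⁻¹' (t n) ∩ Ico 0 1) ≤
        C * ⨆ _ : (t n).Nonempty, EMetric.diam (t n) ^ d := by
      intro n
      by_cases hne : (t n).Nonempty
      · rw [iSup_pos hne]
        exact mass_bound hr0 hr2 hd hrd (t n)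
      · rw [not_nonempty_iff_eq_empty] at hne
        simp [hne]
    calc (1:ℝ≥0∞) ≤ ∑' n, volume (gC r ⁻¹' (t n) ∩ Ico 0 1) := h1
      _ ≤ ∑' n, C * ⨆ _ : (t n).Nonempty, EMetric.diam (t n) ^ d :=
        ENNReal.tsum_le_tsum h2
      _ = C * S := ENNReal.tsum_mul_left
  have := mul_le_mul_right key C⁻¹
  rwa [mul_one, ← mul_assoc, ENNReal.inv_mul_cancel hC0 hCt, one_mul] at this

lemma cantor_upper : μH[d] (closure (gC r '' Ico 0 1)) ≤ 1 := by
  have hr1' : r < 1 := by linarith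
  classical
  have htend : Tendsto (fun n : ℕ => ENNReal.ofReal (r ^ n)) atTop (𝓝 0) := by
    have : Tendsto (fun n : ℕ => r ^ n) atTop (𝓝 0) :=
      tendsto_pow_atTop_nhds_zero_of_lt_one hr0.le hr1'
    simpa using ENNReal.tendsto_ofReal this
  have hdiam : ∀ᶠ n in atTop, ∀ b : Fin n → Bool,
      EMetric.diam (Icc (∑ i : Fin n, if b i then (1-r) * r ^ (i:ℕ) else 0)
        ((∑ i : Fin n, if b i then (1-r) * r ^ (i:ℕ) else 0) + r ^ n))
        ≤ ENNReal.ofReal (r ^ n) := by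
    filter_upwards with n
    intro b
    rw [EMetric.diam, Real.ediam_Icc]
    simp
  have hcov : ∀ᶠ n in atTop, closure (gC r '' Ico 0 1) ⊆
      ⋃ b : Fin n → Bool, Icc (∑ i : Fin n, if b i then (1-r) * r ^ (i:ℕ) else 0)
        ((∑ i : Fin n, if b i then (1-r) * r ^ (i:ℕ) else 0) + r ^ n) := by
    filter_upwards with n
    refine closure_minimal ?_ (isClosed_iUnion_of_finite fun b => isClosed_Icc)
    rintro y ⟨x, hx, rfl⟩
    set b : Fin n → Bool := fun i => decide (bitC (i:ℕ) x = 1) with hb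
    refine mem_iUnion.mpr ⟨b, ?_⟩
    have hhead : ∑ i : Fin n, (if b i then (1-r) * r ^ (i:ℕ) else 0)
        = ∑ i ∈ Finset.range n, termC r x i := by
      rw [← Fin.sum_univ_eq_sum_range (fun i => termC r x i) n]
      refine Finset.sum_congr rfl fun i _ => ?_
      unfold termC
      simp [hb]
    have hsplit := Summable.sum_add_tsum_nat_add (f := termC r x) n (summable_termC hr0 hr2 x)
    have htail0 : 0 ≤ ∑' i, termC r x (i + n) :=
      tsum_nonneg fun i => termC_nonneg hr0 hr2 x _
    have htail1 : ∑' i, termC r x (i + n) ≤ r ^ n := by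
      refine le_of_abs_le (tail_abs hr0 hr2 (termC r x) (fun i => ?_) n)
      rw [abs_of_nonneg (termC_nonneg hr0 hr2 x i)]
      exact termC_le hr0 hr2 x i
    have hg : gC r x = ∑' i, termC r x i := rfl
    constructor
    · rw [hhead]
      show _ ≤ gC r x
      rw [hg, ← hsplit]; linarith
    · rw [hhead]
      show gC r x ≤ _
      rw [hg, ← hsplit]; linarith
  have hle := MeasureTheory.Measure.hausdorffMeasure_le_liminf_sum d
    (closure (gC r '' Ico 0 1)) (fun n => ENNReal.ofReal (r ^ n)) htend
    (fun n (b : Fin n → Bool) =>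
      Icc (∑ i : Fin n, if b i then (1-r) * r ^ (i:ℕ) else 0)
        ((∑ i : Fin n, if b i then (1-r) * r ^ (i:ℕ) else 0) + r ^ n)) hdiam hcov
  refine hle.trans (le_of_eq ?_)
  apply Filter.Tendsto.liminf_eq
  have hval : ∀ n : ℕ, (∑ b : Fin n → Bool, EMetric.diam
      (Icc (∑ i : Fin n, if b i then (1-r) * r ^ (i:ℕ) else 0)
        ((∑ i : Fin n, if b i then (1-r) * r ^ (i:ℕ) else 0) + r ^ n)) ^ d) = 1 := by
    intro n
    have hterm : ∀ b : Fin n → Bool, EMetric.diam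
        (Icc (∑ i : Fin n, if b i then (1-r) * r ^ (i:ℕ) else 0)
          ((∑ i : Fin n, if b i then (1-r) * r ^ (i:ℕ) else 0) + r ^ n)) ^ d
        = ((2:ℝ≥0∞))⁻¹ ^ n := by
      intro b
      rw [EMetric.diam, Real.ediam_Icc]
      rw [show (∑ i : Fin n, if b i then (1-r) * r ^ (i:ℕ) else 0) + r ^ n
        - (∑ i : Fin n, if b i then (1-r) * r ^ (i:ℕ) else 0) = r ^ n by ring]
      rw [ENNReal.ofReal_rpow_of_pos (by positivity), pow_rpow_comm' hr0.le, hrd,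
        ENNReal.ofReal_pow (by norm_num), ENNReal.ofReal_inv_of_pos (by norm_num)]
      norm_num
    rw [Finset.sum_congr rfl (fun b _ => hterm b), Finset.sum_const, Finset.card_univ]
    have hcard : Fintype.card (Fin n → Bool) = 2 ^ n := by
      rw [Fintype.card_fun, Fintype.card_bool, Fintype.card_fin]
    rw [hcard, nsmul_eq_mul]
    push_cast
    rw [← mul_pow, ENNReal.mul_inv_cancel (by norm_num) (by norm_num), one_pow]
  exact Filter.Tendsto.congr (fun n => (hval n).symm) tendsto_const_nhds

end CantorDim

/-- A Cantor-type compact nowhere dense subset of `[a, b]` of Hausdorff dimension `θ ∈ (0,1)`. -/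
lemma exists_cantor_subset (a b θ : ℝ) (hab : a < b) (h0 : 0 < θ) (h1 : θ < 1) :
    ∃ K : Set ℝ, K.Nonempty ∧ IsClosed K ∧ K ⊆ Icc a b ∧ interior K = ∅ ∧
      dimH K = ENNReal.ofReal θ := by
  set r : ℝ := (2:ℝ)⁻¹ ^ θ⁻¹ with hrdef
  have hr0 : 0 < r := Real.rpow_pos_of_pos (by norm_num) _
  have hr2 : r < 2⁻¹ := by
    have hinv : (1:ℝ) < θ⁻¹ := by
      rw [lt_inv_comm₀ (by norm_num) h0]; simpa using h1
    have := Real.rpow_lt_rpow_of_exponent_gt (x := (2:ℝ)⁻¹) (by norm_num) (by norm_num) hinv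
    rwa [Real.rpow_one] at this
  have hrd : r ^ θ = 2⁻¹ := by
    rw [hrdef, ← Real.rpow_mul (by norm_num), inv_mul_cancel₀ h0.ne', Real.rpow_one]
  set K₀ : Set ℝ := closure (gC r '' Ico 0 1) with hK₀
  have hK₀sub : K₀ ⊆ Icc 0 1 := by
    refine closure_minimal ?_ isClosed_Icc
    rintro y ⟨x, _, rfl⟩
    exact ⟨gC_nonneg hr0 hr2 x, gC_le_one hr0 hr2 x⟩
  have hK₀ne : K₀.Nonempty :=
    ⟨gC r 0, subset_closure (mem_image_of_mem _ ⟨le_refl 0, zero_lt_one⟩)⟩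
  have hK₀cpt : IsCompact K₀ :=
    IsCompact.of_isClosed_subset isCompact_Icc isClosed_closure hK₀sub
  have hlow := cantor_lower hr0 hr2 h0 hrd
  have hupp := cantor_upper hr0 hr2 h0 hrd
  have hdim₀ : dimH K₀ = ENNReal.ofReal θ := by
    have hcoe : ((θ.toNNReal : ℝ)) = θ := Real.coe_toNNReal θ h0.le
    have hofReal : (θ.toNNReal : ℝ≥0∞) = ENNReal.ofReal θ := rfl
    refine le_antisymm ?_ ?_
    · rw [← hofReal]
      refine dimH_le_of_hausdorffMeasure_ne_top ?_
      rw [hcoe]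
      exact fun h => by rw [h] at hupp; exact absurd hupp (by norm_num)
    · rw [← hofReal]
      refine le_dimH_of_hausdorffMeasure_ne_zero ?_
      rw [hcoe]
      intro h
      rw [h] at hlow
      exact (ENNReal.inv_ne_zero.mpr ENNReal.ofReal_ne_top)
        (le_antisymm hlow zero_le)
  -- transport to [a, b]
  set T : ℝ → ℝ := fun x => a + (b - a) * x with hT
  have hba : (0:ℝ) < b - a := by linarith
  have hlip : LipschitzWith (b - a).toNNReal T := by
    apply LipschitzWith.of_dist_le_mul
    intro x y
    rw [Real.coe_toNNReal _ hba.le, Real.dist_eq, Real.dist_eq, hT]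
    rw [show a + (b-a)*x - (a + (b-a)*y) = (b-a)*(x-y) by ring, abs_mul,
      abs_of_pos hba]
  have hanti : AntilipschitzWith (b - a)⁻¹.toNNReal T := by
    apply AntilipschitzWith.of_le_mul_dist
    intro x y
    rw [Real.coe_toNNReal _ (by positivity : (0:ℝ) ≤ (b-a)⁻¹), Real.dist_eq, Real.dist_eq, hT]
    rw [show a + (b-a)*x - (a + (b-a)*y) = (b-a)*(x-y) by ring, abs_mul,
      abs_of_pos hba]
    rw [← mul_assoc, inv_mul_cancel₀ hba.ne', one_mul]
  refine ⟨T '' K₀, hK₀ne.image T, ?_, ?_, ?_, ?_⟩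
  · exact (hK₀cpt.image (by continuity : Continuous T)).isClosed
  · rintro y ⟨x, hx, rfl⟩
    obtain ⟨hx0, hx1⟩ := hK₀sub hx
    constructor
    · show a ≤ a + (b - a) * x
      nlinarith
    · show a + (b - a) * x ≤ b
      nlinarith
  · have hdim : dimH (T '' K₀) = ENNReal.ofReal θ := by
      refine le_antisymm ?_ ?_
      · rw [← hdim₀]; exact hlip.dimH_image_le K₀
      · rw [← hdim₀]; exact hanti.le_dimH_image K₀
    rw [interior_eq_empty_iff_dense_compl]
    apply dense_compl_of_dimH_lt_finrank
    rw [hdim]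
    simp only [Module.finrank_self, Nat.cast_one]
    exact lt_of_lt_of_le (ENNReal.ofReal_lt_one.mpr h1) le_rfl
  · refine le_antisymm ?_ ?_
    · rw [← hdim₀]; exact hlip.dimH_image_le K₀
    · rw [← hdim₀]; exact hanti.le_dimH_image K₀




section Phi

/-- The basic spike kernel. -/
noncomputable def phiK (n : ℕ) (t : ℝ) : ℝ := (n : ℝ) / (1 + n * t)

lemma phiK_denom_pos (n : ℕ) {t : ℝ} (ht : 0 ≤ t) : (0:ℝ) < 1 + n * t := by positivity

lemma phiK_nonneg (n : ℕ) {t : ℝ} (ht : 0 ≤ t) : 0 ≤ phiK n t := by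
  unfold phiK; positivity

lemma phiK_mono (n : ℕ) {t : ℝ} (ht : 0 ≤ t) : phiK n t ≤ phiK (n + 1) t := by
  unfold phiK
  have h1 := phiK_denom_pos n ht
  have h2 : (0:ℝ) < 1 + ((n:ℝ) + 1) * t := by nlinarith
  push_cast
  rw [div_le_div_iff₀ h1 h2]
  nlinarith

lemma phiK_le_inv (n : ℕ) {t : ℝ} (ht : 0 < t) : phiK n t ≤ t⁻¹ := by
  unfold phiK
  rw [inv_eq_one_div, div_le_div_iff₀ (phiK_denom_pos n ht.le) ht]
  nlinarith

lemma phiK_zero (n : ℕ) : phiK n 0 = n := by unfold phiK; simp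

end Phi

/-- The max-family used in the proof. -/
noncomputable def famF (K : Set ℝ) (n : ℕ) (x : ℝ) : ℝ :=
  phiK n (Metric.infDist x K) +
    ∑ k ∈ Finset.range (n + 1), (4:ℝ)⁻¹ ^ k * phiK n (|x - ratQ k|)

lemma famF_cont (K : Set ℝ) (n : ℕ) : Continuous (famF K n) := by
  have h1 : Continuous fun x : ℝ => phiK n (Metric.infDist x K) := by
    apply Continuous.div continuous_const
    · exact continuous_const.add (continuous_const.mul (Metric.continuous_infDist_pt K))
    · intro x
      exact ne_of_gt (phiK_denom_pos n Metric.infDist_nonneg)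
  refine h1.add (continuous_finset_sum _ fun k _ => Continuous.mul continuous_const ?_)
  apply Continuous.div continuous_const
  · exact continuous_const.add
      (continuous_const.mul (continuous_id.sub continuous_const).abs)
  · intro x
    exact ne_of_gt (phiK_denom_pos n (abs_nonneg _))

lemma famF_mono (K : Set ℝ) (n : ℕ) (x : ℝ) : famF K n x ≤ famF K (n + 1) x := by
  unfold famF
  apply add_le_add (phiK_mono n Metric.infDist_nonneg)
  calc ∑ k ∈ Finset.range (n + 1), (4:ℝ)⁻¹ ^ k * phiK n (|x - ratQ k|)
      ≤ ∑ k ∈ Finset.range (n + 1), (4:ℝ)⁻¹ ^ k * phiK (n+1) (|x - ratQ k|) := by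
        refine Finset.sum_le_sum fun k _ => ?_
        exact mul_le_mul_of_nonneg_left (phiK_mono n (abs_nonneg _)) (by positivity)
    _ ≤ ∑ k ∈ Finset.range (n + 2), (4:ℝ)⁻¹ ^ k * phiK (n+1) (|x - ratQ k|) := by
        refine Finset.sum_le_sum_of_subset_of_nonneg
          (Finset.range_subset_range.mpr (by omega)) fun k _ _ => ?_
        exact mul_nonneg (by positivity) (phiK_nonneg _ (abs_nonneg _))

lemma famF_nonneg (K : Set ℝ) (n : ℕ) (x : ℝ) : 0 ≤ famF K n x := by
  unfold famF
  apply add_nonneg (phiK_nonneg n Metric.infDist_nonneg)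
  exact Finset.sum_nonneg fun k _ => mul_nonneg (by positivity)
    (phiK_nonneg _ (abs_nonneg _))

lemma famF_single_le (K : Set ℝ) (n k : ℕ) (hk : k ≤ n) (x : ℝ) :
    (4:ℝ)⁻¹ ^ k * phiK n (|x - ratQ k|) ≤ famF K n x := by
  unfold famF
  have h1 : (4:ℝ)⁻¹ ^ k * phiK n (|x - ratQ k|) ≤
      ∑ j ∈ Finset.range (n + 1), (4:ℝ)⁻¹ ^ j * phiK n (|x - ratQ j|) := by
    apply Finset.single_le_sum (f := fun j => (4:ℝ)⁻¹ ^ j * phiK n (|x - ratQ j|))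
      (fun j _ => mul_nonneg (by positivity) (phiK_nonneg _ (abs_nonneg _)))
    rw [Finset.mem_range]; omega
  have h2 := phiK_nonneg n (Metric.infDist_nonneg (x := x) (s := K))
  linarith

/-- On points of `K`, the family tends to infinity. -/
lemma famF_tendsto_of_memK (K : Set ℝ) {x : ℝ} (hx : x ∈ K) :
    Tendsto (fun n => famF K n x) atTop atTop := by
  have hlb : ∀ n : ℕ, (n:ℝ) ≤ famF K n x := by
    intro n
    have h1 : phiK n (Metric.infDist x K) = n := by
      rw [Metric.infDist_zero_of_mem hx, phiK_zero]
    unfold famF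
    rw [h1]
    have := Finset.sum_nonneg (s := Finset.range (n+1))
      (f := fun k => (4:ℝ)⁻¹ ^ k * phiK n (|x - ratQ k|))
      (fun k _ => mul_nonneg (by positivity) (phiK_nonneg _ (abs_nonneg _)))
    linarith
  exact tendsto_atTop_mono hlb tendsto_natCast_atTop_atTop

/-- At rational points the family tends to infinity. -/
lemma famF_tendsto_of_rat (K : Set ℝ) (k : ℕ) :
    Tendsto (fun n => famF K n (ratQ k)) atTop atTop := by
  have hlb : ∀ n : ℕ, n ≥ k → (4:ℝ)⁻¹ ^ k * n ≤ famF K n (ratQ k) := by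
    intro n hn
    have h := famF_single_le K n k hn (ratQ k)
    rw [sub_self, abs_zero, phiK_zero] at h
    exact h
  refine tendsto_atTop_mono' atTop (eventually_atTop.mpr ⟨k, hlb⟩) ?_
  exact Tendsto.const_mul_atTop (by positivity) tendsto_natCast_atTop_atTop

/-- Away from `K`, the rationals and the bad set, the family is bounded. -/
lemma famF_not_tendsto (K : Set ℝ) (hKne : K.Nonempty) (hKcl : IsClosed K) {x : ℝ}
    (hxK : x ∉ K) (hxq : x ∉ range ratQ) (hxE : x ∉ Eset ratQ) :
    ¬ Tendsto (fun n => famF K n x) atTop atTop := by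
  have hD : 0 < Metric.infDist x K := (hKcl.notMem_iff_infDist_pos hKne).mp hxK
  have hq : ∀ k, 0 < |x - ratQ k| := by
    intro k
    rw [abs_pos, sub_ne_zero]
    exact fun h => hxq ⟨k, h.symm⟩
  obtain ⟨N, hN⟩ : ∃ N, ∀ k, N ≤ k → (2:ℝ)⁻¹ ^ k < |x - ratQ k| := by
    by_contra hcon
    push_neg at hcon
    exact hxE fun M => hcon M
  set b : ℕ → ℝ := fun k => if k < N then (4:ℝ)⁻¹ ^ k * |x - ratQ k|⁻¹ else (2:ℝ)⁻¹ ^ k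
    with hb
  have hbnn : ∀ k, 0 ≤ b k := by
    intro k; rw [hb]; dsimp only; split
    · exact mul_nonneg (by positivity) (by positivity)
    · positivity
  have hcb : ∀ k, (4:ℝ)⁻¹ ^ k * |x - ratQ k|⁻¹ ≤ b k := by
    intro k; rw [hb]; dsimp only; split
    · exact le_rfl
    · have hNk : N ≤ k := by omega
      have h1 : (2:ℝ)⁻¹ ^ k < |x - ratQ k| := hN k hNk
      have h2 : |x - ratQ k|⁻¹ ≤ ((2:ℝ)⁻¹ ^ k)⁻¹ := by
        apply inv_anti₀ (by positivity) h1.le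
      calc (4:ℝ)⁻¹ ^ k * |x - ratQ k|⁻¹ ≤ (4:ℝ)⁻¹ ^ k * ((2:ℝ)⁻¹ ^ k)⁻¹ :=
            mul_le_mul_of_nonneg_left h2 (by positivity)
        _ = (2:ℝ)⁻¹ ^ k := by
            rw [← inv_pow, inv_inv, ← mul_pow]
            norm_num
  have hbsum : Summable b := by
    apply (_root_.summable_nat_add_iff N).mp
    have heq : ∀ k : ℕ, b (k + N) = (2:ℝ)⁻¹ ^ (k + N) := by
      intro k; rw [hb]; dsimp only; rw [if_neg (by omega)]
    rw [funext heq]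
    simp_rw [pow_add]
    exact (summable_geometric_of_lt_one (by norm_num) (by norm_num)).mul_right _
  set M : ℝ := (Metric.infDist x K)⁻¹ + ∑' k, b k with hM
  have hub : ∀ n, famF K n x ≤ M := by
    intro n
    unfold famF
    have h1 : phiK n (Metric.infDist x K) ≤ (Metric.infDist x K)⁻¹ := phiK_le_inv n hD
    have h2 : ∑ k ∈ Finset.range (n + 1), (4:ℝ)⁻¹ ^ k * phiK n (|x - ratQ k|)
        ≤ ∑' k, b k := by
      calc ∑ k ∈ Finset.range (n + 1), (4:ℝ)⁻¹ ^ k * phiK n (|x - ratQ k|)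
          ≤ ∑ k ∈ Finset.range (n + 1), b k := by
            refine Finset.sum_le_sum fun k _ => ?_
            refine le_trans ?_ (hcb k)
            exact mul_le_mul_of_nonneg_left (phiK_le_inv n (hq k)) (by positivity)
        _ ≤ ∑' k, b k := Summable.sum_le_tsum _ (fun k _ => hbnn k) hbsum
    linarith
  intro hT
  obtain ⟨n, hn⟩ := (hT.eventually (eventually_ge_atTop (M + 1))).exists
  have := hub n
  linarith

/-- Integral lower bound and divergence. -/
lemma famF_integral_tendsto (K : Set ℝ) {x y : ℝ} (hxy : x < y) :
    Tendsto (fun n => ∫ t in x..y, famF K n t) atTop atTop := by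
  obtain ⟨ρ, hρ1, hρ2⟩ := exists_rat_btwn hxy
  obtain ⟨k₀, hk₀⟩ := ratQ_surj ρ
  set p : ℝ := (ρ : ℝ) with hp
  have hδ : (0:ℝ) < y - p := by rw [hp]; linarith
  have key : ∀ n : ℕ, k₀ ≤ n →
      (4:ℝ)⁻¹ ^ k₀ * Real.log (1 + n * (y - p)) ≤ ∫ t in x..y, famF K n t := by
    intro n hn
    have hcont_spike : Continuous fun t : ℝ => (4:ℝ)⁻¹ ^ k₀ * phiK n (|t - ratQ k₀|) := by
      refine continuous_const.mul (Continuous.div continuous_const ?_ ?_)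
      · exact continuous_const.add
          (continuous_const.mul (continuous_id.sub continuous_const).abs)
      · intro t; exact ne_of_gt (phiK_denom_pos n (abs_nonneg _))
    have hI1 : (∫ t in x..y, (4:ℝ)⁻¹ ^ k₀ * phiK n (|t - ratQ k₀|))
        ≤ ∫ t in x..y, famF K n t := by
      apply intervalIntegral.integral_mono_on hxy.le
        (hcont_spike.intervalIntegrable x y) ((famF_cont K n).intervalIntegrable x y)
      intro t _
      exact famF_single_le K n k₀ hn t
    have hsplit : (∫ t in x..p, (4:ℝ)⁻¹ ^ k₀ * phiK n (|t - ratQ k₀|))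
        + (∫ t in p..y, (4:ℝ)⁻¹ ^ k₀ * phiK n (|t - ratQ k₀|))
        = ∫ t in x..y, (4:ℝ)⁻¹ ^ k₀ * phiK n (|t - ratQ k₀|) :=
      intervalIntegral.integral_add_adjacent_intervals
        (hcont_spike.intervalIntegrable x p) (hcont_spike.intervalIntegrable p y)
    have hI2 : 0 ≤ ∫ t in x..p, (4:ℝ)⁻¹ ^ k₀ * phiK n (|t - ratQ k₀|) := by
      apply intervalIntegral.integral_nonneg (by rw [hp]; linarith)
      intro t _
      exact mul_nonneg (by positivity) (phiK_nonneg _ (abs_nonneg _))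
    have hI3 : (∫ t in p..y, (4:ℝ)⁻¹ ^ k₀ * phiK n (|t - ratQ k₀|))
        = (4:ℝ)⁻¹ ^ k₀ * Real.log (1 + n * (y - p)) := by
      have hcongr : EqOn (fun t : ℝ => (4:ℝ)⁻¹ ^ k₀ * phiK n (|t - ratQ k₀|))
          (fun t : ℝ => (4:ℝ)⁻¹ ^ k₀ * ((n:ℝ) / (1 + n * (t - p)))) (uIcc p y) := by
        intro t ht
        rw [uIcc_of_le (by linarith)] at ht
        have habs : |t - ratQ k₀| = t - p := by
          rw [hk₀, abs_of_nonneg (by linarith [ht.1])]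
        show (4:ℝ)⁻¹ ^ k₀ * phiK n (|t - ratQ k₀|) = (4:ℝ)⁻¹ ^ k₀ * ((n:ℝ) / (1 + n * (t - p)))
        rw [habs]
        rfl
      rw [intervalIntegral.integral_congr hcongr]
      have hderiv : ∀ t ∈ uIcc p y, HasDerivAt
          (fun t : ℝ => (4:ℝ)⁻¹ ^ k₀ * Real.log (1 + n * (t - p)))
          ((4:ℝ)⁻¹ ^ k₀ * ((n:ℝ) / (1 + n * (t - p)))) t := by
        intro t ht
        rw [uIcc_of_le (by linarith)] at ht
        have hpos : (0:ℝ) < 1 + n * (t - p) := by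
          have := ht.1
          have h0 : (0:ℝ) ≤ (n:ℝ) := Nat.cast_nonneg n
          nlinarith
        have hinner : HasDerivAt (fun t : ℝ => 1 + (n:ℝ) * (t - p)) (n:ℝ) t := by
          simpa using (((hasDerivAt_id t).sub_const p).const_mul (n:ℝ)).const_add 1
        have hlog := (Real.hasDerivAt_log (ne_of_gt hpos)).comp t hinner
        have := hlog.const_mul ((4:ℝ)⁻¹ ^ k₀)
        rw [show ((4:ℝ)⁻¹ ^ k₀ * ((n:ℝ) / (1 + n * (t - p)))) = (4:ℝ)⁻¹ ^ k₀ * ((1 + n * (t - p))⁻¹ * n) by ring]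
        exact this
      have hint : IntervalIntegrable
          (fun t : ℝ => (4:ℝ)⁻¹ ^ k₀ * ((n:ℝ) / (1 + n * (t - p)))) volume p y := by
        apply ContinuousOn.intervalIntegrable
        refine continuousOn_const.mul (ContinuousOn.div continuousOn_const ?_ ?_)
        · exact Continuous.continuousOn (by
            exact continuous_const.add (continuous_const.mul
              (continuous_id.sub continuous_const)))
        · intro t ht
          rw [uIcc_of_le (by linarith)] at ht
          have h0 : (0:ℝ) ≤ (n:ℝ) := Nat.cast_nonneg n
          have := ht.1
          nlinarith
      rw [intervalIntegral.integral_eq_sub_of_hasDerivAt hderiv hint]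
      simp
    linarith [hI1, hI2, hsplit, hI3.ge, hI3.le]
  refine tendsto_atTop_mono' atTop (eventually_atTop.mpr ⟨k₀, key⟩) ?_
  apply Tendsto.const_mul_atTop (show (0:ℝ) < (4:ℝ)⁻¹ ^ k₀ by positivity)
  apply Real.tendsto_log_atTop.comp
  apply tendsto_atTop_add_const_left
  exact Tendsto.atTop_mul_const hδ tendsto_natCast_atTop_atTop

/-- Nowhere density of the trace of a closed set with empty interior on the interval. -/
lemma nowhereDense_trace (I : Set ℝ) (hI : I.OrdConnected) (hInt : I.Nontrivial)
    (K : Set ℝ) (hKcl : IsClosed K) (hKint : interior K = ∅) :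
    IsNowhereDense ((Subtype.val ⁻¹' K : Set I)) := by
  have hcl : IsClosed ((Subtype.val ⁻¹' K : Set I)) := hKcl.preimage continuous_subtype_val
  rw [hcl.isNowhereDense_iff]
  rw [eq_empty_iff_forall_notMem]
  rintro ⟨x, hxI⟩ hmem
  have hnb : (Subtype.val ⁻¹' K : Set I) ∈ 𝓝 (⟨x, hxI⟩ : I) :=
    mem_interior_iff_mem_nhds.mp hmem
  rw [nhds_subtype_eq_comap, mem_comap] at hnb
  obtain ⟨U, hU, hUK⟩ := hnb
  obtain ⟨ε, hε, hball⟩ := Metric.mem_nhds_iff.mp hU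
  have hKloc : ∀ z, z ∈ I → |z - x| < ε → z ∈ K := by
    intro z hzI hz
    have : z ∈ U := hball (by rwa [Metric.mem_ball, Real.dist_eq])
    exact hUK (show (⟨z, hzI⟩ : I) ∈ Subtype.val ⁻¹' U from this)
  obtain ⟨y, hyI, hyx⟩ : ∃ y ∈ I, y ≠ x := by
    obtain ⟨u, huI, v, hvI, huv⟩ := hInt
    by_cases hux : u = x
    · exact ⟨v, hvI, by rw [← hux]; exact fun h => huv h.symm⟩
    · exact ⟨u, huI, hux⟩
  rcases hyx.lt_or_gt with hlt | hlt
  · -- y < x : use interval [c, x]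
    set c : ℝ := max y (x - ε / 2) with hc
    have hcx : c < x := by
      rw [hc]; apply max_lt hlt; linarith
    have hcI : Icc c x ⊆ I := by
      intro z hz
      apply hI.out hyI hxI
      exact ⟨le_trans (le_max_left y _) hz.1, hz.2⟩
    have hsubK : Icc c x ⊆ K := by
      intro z hz
      apply hKloc z (hcI hz)
      have h1 : x - ε / 2 ≤ c := le_max_right _ _
      have h2 := hz.1
      have h3 := hz.2
      rw [abs_lt]; constructor <;> linarith
    have : (c + x) / 2 ∈ interior K := by
      apply interior_mono hsubK
      rw [interior_Icc]
      constructor <;> [linarith; linarith]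
    rw [hKint] at this
    exact this
  · -- x < y : use interval [x, c]
    set c : ℝ := min y (x + ε / 2) with hc
    have hcx : x < c := by
      rw [hc]; apply lt_min hlt; linarith
    have hcI : Icc x c ⊆ I := by
      intro z hz
      apply hI.out hxI hyI
      exact ⟨hz.1, le_trans hz.2 (min_le_left y _)⟩
    have hsubK : Icc x c ⊆ K := by
      intro z hz
      apply hKloc z (hcI hz)
      have h1 : c ≤ x + ε / 2 := min_le_right _ _
      have h2 := hz.1
      have h3 := hz.2
      rw [abs_lt]; constructor <;> linarith
    have : (x + c) / 2 ∈ interior K := by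
      apply interior_mono hsubK
      rw [interior_Icc]
      constructor <;> [linarith; linarith]
    rw [hKint] at this
    exact this

/-- The main reduction: from a suitable closed set `K` to the conclusion. -/
lemma main_reduction (I : Set ℝ) (hI : I.OrdConnected) (hInt : I.Nontrivial)
    (θ : ℝ) (K : Set ℝ) (hKne : K.Nonempty) (hKcl : IsClosed K) (hKI : K ⊆ I)
    (hKint : interior K = ∅) (hdim : dimH K = ENNReal.ofReal θ) :
    ∃ f : ℕ → ℝ → ℝ, IsMaxFamily I f ∧
      dimH (limSet I f) = ENNReal.ofReal θ ∧
      ∃ A B : Set ℝ, limSet I f = A ∪ B ∧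
        IsNowhereDense ((Subtype.val ⁻¹' A : Set I)) ∧
        dimH B = 0 := by
  refine ⟨famF K, ⟨fun n => (famF_cont K n).continuousOn,
    fun n x _ => famF_mono K n x,
    fun x _ y _ hxy => famF_integral_tendsto K hxy⟩, ?_, K, limSet I (famF K) \ K, ?_, ?_, ?_⟩
  · -- dimension of the limit set
    have hKsubLim : K ⊆ limSet I (famF K) := fun x hx =>
      ⟨hKI hx, famF_tendsto_of_memK K hx⟩
    have hLimSub : limSet I (famF K) ⊆ K ∪ (range ratQ ∪ Eset ratQ) := by
      intro x hx
      by_cases h1 : x ∈ K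
      · exact Or.inl h1
      by_cases h2 : x ∈ range ratQ
      · exact Or.inr (Or.inl h2)
      by_cases h3 : x ∈ Eset ratQ
      · exact Or.inr (Or.inr h3)
      exact absurd hx.2 (famF_not_tendsto K hKne hKcl h1 h2 h3)
    refine le_antisymm ?_ ?_
    · calc dimH (limSet I (famF K)) ≤ dimH (K ∪ (range ratQ ∪ Eset ratQ)) :=
            dimH_mono hLimSub
        _ = ENNReal.ofReal θ := by
            rw [dimH_union, dimH_union, dimH_countable (countable_range ratQ),
              dimH_Eset ratQ, hdim]
            simp
    · rw [← hdim]
      exact dimH_mono hKsubLim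
  · -- decomposition
    exact (union_diff_cancel (fun x hx =>
      show x ∈ limSet I (famF K) from ⟨hKI hx, famF_tendsto_of_memK K hx⟩)).symm
  · exact nowhereDense_trace I hI hInt K hKcl hKint
  · -- dimension of B
    refine le_antisymm ?_ zero_le
    have hBsub : limSet I (famF K) \ K ⊆ range ratQ ∪ Eset ratQ := by
      rintro x ⟨hx, hxK⟩
      by_cases h2 : x ∈ range ratQ
      · exact Or.inl h2
      by_cases h3 : x ∈ Eset ratQ
      · exact Or.inr h3
      exact absurd hx.2 (famF_not_tendsto K hKne hKcl hxK h2 h3)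
    calc dimH (limSet I (famF K) \ K) ≤ dimH (range ratQ ∪ Eset ratQ) := dimH_mono hBsub
      _ = 0 := by
          rw [dimH_union, dimH_countable (countable_range ratQ), dimH_Eset ratQ]
          simp


/-- For every nondegenerate interval `I` and every `θ ∈ [0,1]` there is a max-family `(f_n)`
with `dim_H I_f = θ` such that `I_f` decomposes into a set nowhere dense in `I` and a set of
Hausdorff dimension zero. -/
theorem stmt_12 (I : Set ℝ) (hI : I.OrdConnected) (hInt : I.Nontrivial)
    (θ : ℝ) (hθ : θ ∈ Icc (0 : ℝ) 1) :
    ∃ f : ℕ → ℝ → ℝ, IsMaxFamily I f ∧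
      dimH (limSet I f) = ENNReal.ofReal θ ∧
      ∃ A B : Set ℝ, limSet I f = A ∪ B ∧
        IsNowhereDense ((Subtype.val ⁻¹' A : Set I)) ∧
        dimH B = 0 := by
  obtain ⟨u, huI, v, hvI, huv⟩ := hInt
  obtain ⟨a, b, haI, hbI, hab⟩ : ∃ a b : ℝ, a ∈ I ∧ b ∈ I ∧ a < b := by
    rcases huv.lt_or_gt with h | h
    · exact ⟨u, v, huI, hvI, h⟩
    · exact ⟨v, u, hvI, huI, h⟩
  have hIcc : Icc a b ⊆ I := hI.out haI hbI
  have hInt' : I.Nontrivial := ⟨u, huI, v, hvI, huv⟩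
  rcases eq_or_lt_of_le hθ.1 with hθ0 | hθ0
  · -- θ = 0 : a singleton works
    refine main_reduction I hI hInt' θ {a} (singleton_nonempty a) isClosed_singleton
      (by simpa using haI) (interior_singleton a) ?_
    rw [dimH_singleton, ← hθ0]
    simp
  rcases eq_or_lt_of_le hθ.2 with hθ1 | hθ1
  · -- θ = 1 : fat Cantor set
    obtain ⟨K, hKne, hKcl, hKsub, hKint, hKdim⟩ := exists_fatCantor hab
    refine main_reduction I hI hInt' θ K hKne hKcl (hKsub.trans hIcc) hKint ?_
    rw [hKdim, hθ1]
    simp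
  · -- 0 < θ < 1 : Cantor set of dimension θ
    obtain ⟨K, hKne, hKcl, hKsub, hKint, hKdim⟩ := exists_cantor_subset a b θ hab hθ0 hθ1
    exact main_reduction I hI hInt' θ K hKne hKcl (hKsub.trans hIcc) hKint hKdim
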